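/- arXiv:2110.14001 — 4 statements merged into one kernel-verified Lean document; each statement's English description precedes it below -/
import Mathlib

section
/- Let 𝒳, ℛ, 𝒴 be measurable spaces, κ : 𝒳 → 𝒴 a Markov kernel, Φ : 𝒳 → ℛ measurable, h : ℛ → ℝ measurable, ℓ : 𝒴 × ℝ → ℝ measurable, and Q a probability measure on 𝒳 such that (x,y) ↦ ℓ(y, h(Φ x)) is integrable with respect to the joint measure Q ⊗ κ on 𝒳 × 𝒴. Let ℓ_{h,Q}(x) = ∫ ℓ(y, h(Φ x)) dκ(x)(y) and let ℓ_{h,Q^Φ} : ℛ → ℝ be a measurable function such that ℓ_{h,Q^Φ} ∘ Φ ∘ fst is (Q ⊗ κ)-a.e. equal to the conditional expectation of (x,y) ↦ ℓ(y, h(Φ x)) with respect to the σ-algebra generated by (x,y) ↦ Φ x. Then ∫_𝒳 ℓ_{h,Q}(x) dQ(x) = ∫_ℛ ℓ_{h,Q^Φ}(φ) d(Φ_*Q)(φ). -/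
open MeasureTheory ProbabilityTheory

/-- Lemma C.1: the expected pointwise loss in covariate space equals the
expected pointwise loss in representation space under the pushforward `Φ_*Q`.  Here
`ℓ_{h,Q}(x) = ∫ ℓ(y, h(Φ x)) dκ(x)(y)` and `ℓΦ` is a version of the conditional expectation
of `(x,y) ↦ ℓ(y, h(Φ x))` given the σ-algebra generated by `(x,y) ↦ Φ x` under `Q ⊗ κ`. -/
theorem expected_loss_covariate_eq_representation
    {𝒳 ℛ 𝒴 : Type*} [MeasurableSpace 𝒳] [MeasurableSpace ℛ] [MeasurableSpace 𝒴]
    (κ : Kernel 𝒳 𝒴) [IsMarkovKernel κ]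
    (Φ : 𝒳 → ℛ) (hΦ : Measurable Φ)
    (h : ℛ → ℝ) (hh : Measurable h)
    (ℓ : 𝒴 × ℝ → ℝ) (hℓ : Measurable ℓ)
    (Q : Measure 𝒳) [IsProbabilityMeasure Q]
    (hint : Integrable (fun p : 𝒳 × 𝒴 => ℓ (p.2, h (Φ p.1))) (Q ⊗ₘ κ))
    (ℓΦ : ℛ → ℝ) (hℓΦ : Measurable ℓΦ)
    (hcond : (fun p : 𝒳 × 𝒴 => ℓΦ (Φ p.1)) =ᵐ[Q ⊗ₘ κ]
      (Q ⊗ₘ κ)[(fun p : 𝒳 × 𝒴 => ℓ (p.2, h (Φ p.1))) |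
        MeasurableSpace.comap (fun p : 𝒳 × 𝒴 => Φ p.1) inferInstance]) :
    ∫ x, (∫ y, ℓ (y, h (Φ x)) ∂(κ x)) ∂Q = ∫ φ, ℓΦ φ ∂(Measure.map Φ Q) := by
  have hmeas : Measurable fun p : 𝒳 × 𝒴 => Φ p.1 := hΦ.comp measurable_fst
  calc ∫ x, (∫ y, ℓ (y, h (Φ x)) ∂(κ x)) ∂Q
      = ∫ p, ℓ (p.2, h (Φ p.1)) ∂(Q ⊗ₘ κ) := (Measure.integral_compProd hint).symm
    _ = ∫ p, ((Q ⊗ₘ κ)[(fun p : 𝒳 × 𝒴 => ℓ (p.2, h (Φ p.1))) |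
          MeasurableSpace.comap (fun p : 𝒳 × 𝒴 => Φ p.1) inferInstance]) p ∂(Q ⊗ₘ κ) :=
        (integral_condExp hmeas.comap_le).symm
    _ = ∫ p, ℓΦ (Φ p.1) ∂(Q ⊗ₘ κ) := (integral_congr_ae hcond).symm
    _ = ∫ x, ℓΦ (Φ x) ∂((Q ⊗ₘ κ).fst) := by
        rw [Measure.fst]
        exact (integral_map measurable_fst.aemeasurable
          ((hℓΦ.comp hΦ).aestronglyMeasurable)).symm
    _ = ∫ x, ℓΦ (Φ x) ∂Q := by rw [Measure.fst_compProd]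
    _ = ∫ φ, ℓΦ φ ∂(Measure.map Φ Q) :=
        (integral_map hΦ.aemeasurable hℓΦ.aestronglyMeasurable).symm
end

section
/- In the setting of Proposition 1 (measurable spaces 𝒳, ℛ, 𝒴; shared label kernel κ : 𝒳 → 𝒴; measurable Φ : 𝒳 → ℛ, h : ℛ → ℝ, loss ℓ; probability measures μ₀ and ν on 𝒳; weight w with ∫ w dν = 1 and ν_w = ν.withDensity w; pointwise loss ℓ_h(x) = ∫ ℓ(y, h(Φ x)) dκ(x)(y); representation-space pointwise losses ℓ_{h,μ₀^Φ} and ℓ_{h,ν_w^Φ}; all relevant functions integrable), define η = ∫ (ξ₀(x) − ξ_w(x)) dμ₀(x), where ξ₀(x) = ℓ_{h,μ₀^Φ}(Φ x) − ℓ_h(x) and ξ_w(x) = ℓ_{h,ν_w^Φ}(Φ x) − ℓ_h(x). Then ∫ ℓ_h dμ₀ = ∫_ℛ ℓ_{h,ν_w^Φ}(φ) d(Φ_*μ₀)(φ) + η. -/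
open MeasureTheory ProbabilityTheory

/-- Lemma C.2: the target risk decomposes as the target-pushforward integral of
the weighted-observational representation-space loss plus the excess target information loss
`η = ∫ (ξ₀(x) − ξ_w(x)) dμ₀(x)`, with `ξ₀(x) = ℓΦ0(Φ x) − ℓ_h(x)`,
`ξ_w(x) = ℓΦw(Φ x) − ℓ_h(x)`, `ℓ_h(x) = ∫ ℓ(y, h(Φ x)) dκ(x)(y)` and
`ν_w = ν.withDensity w` the weighted observational measure. -/
theorem target_risk_decomposition
    {𝒳 ℛ 𝒴 : Type*} [MeasurableSpace 𝒳] [MeasurableSpace ℛ] [MeasurableSpace 𝒴]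
    (κ : Kernel 𝒳 𝒴) [IsMarkovKernel κ]
    (Φ : 𝒳 → ℛ) (hΦ : Measurable Φ)
    (h : ℛ → ℝ) (hh : Measurable h)
    (ℓ : 𝒴 × ℝ → ℝ) (hℓ : Measurable ℓ)
    (μ₀ ν : Measure 𝒳) [IsProbabilityMeasure μ₀] [IsProbabilityMeasure ν]
    (w : 𝒳 → ℝ) (hw : Measurable w) (hw0 : ∀ x, 0 ≤ w x) (hw1 : ∫ x, w x ∂ν = 1)
    -- joint integrability of the loss under the joint measures
    (hint0 : Integrable (fun p : 𝒳 × 𝒴 => ℓ (p.2, h (Φ p.1))) (μ₀ ⊗ₘ κ))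
    (hintw : Integrable (fun p : 𝒳 × 𝒴 => ℓ (p.2, h (Φ p.1)))
      ((ν.withDensity fun x => ENNReal.ofReal (w x)) ⊗ₘ κ))
    -- representation-space pointwise losses: versions of the conditional expectation of the
    -- loss given the representation, under `μ₀ ⊗ κ` and `ν_w ⊗ κ` respectively
    (ℓΦ0 ℓΦw : ℛ → ℝ) (hℓΦ0 : Measurable ℓΦ0) (hℓΦw : Measurable ℓΦw)
    (hcond0 : (fun p : 𝒳 × 𝒴 => ℓΦ0 (Φ p.1)) =ᵐ[μ₀ ⊗ₘ κ]
      (μ₀ ⊗ₘ κ)[(fun p : 𝒳 × 𝒴 => ℓ (p.2, h (Φ p.1))) |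
        MeasurableSpace.comap (fun p : 𝒳 × 𝒴 => Φ p.1) inferInstance])
    (hcondw : (fun p : 𝒳 × 𝒴 => ℓΦw (Φ p.1))
        =ᵐ[(ν.withDensity fun x => ENNReal.ofReal (w x)) ⊗ₘ κ]
      ((ν.withDensity fun x => ENNReal.ofReal (w x)) ⊗ₘ κ)[
        (fun p : 𝒳 × 𝒴 => ℓ (p.2, h (Φ p.1))) |
        MeasurableSpace.comap (fun p : 𝒳 × 𝒴 => Φ p.1) inferInstance])
    -- integrability of all relevant functions
    (hint1 : Integrable (fun x => ∫ y, ℓ (y, h (Φ x)) ∂(κ x)) μ₀)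
    (hint3 : Integrable (fun x => ℓΦ0 (Φ x)) μ₀)
    (hint4 : Integrable (fun x => ℓΦw (Φ x)) μ₀)
    (hint5 : Integrable ℓΦw (Measure.map Φ μ₀)) :
    ∫ x, (∫ y, ℓ (y, h (Φ x)) ∂(κ x)) ∂μ₀
      = (∫ φ, ℓΦw φ ∂(Measure.map Φ μ₀))
        + ∫ x, ((ℓΦ0 (Φ x) - ∫ y, ℓ (y, h (Φ x)) ∂(κ x))
            - (ℓΦw (Φ x) - ∫ y, ℓ (y, h (Φ x)) ∂(κ x))) ∂μ₀ := by
  have key : ∫ x, ℓΦ0 (Φ x) ∂μ₀ = ∫ x, (∫ y, ℓ (y, h (Φ x)) ∂(κ x)) ∂μ₀ := by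
    have hm : MeasurableSpace.comap (fun p : 𝒳 × 𝒴 => Φ p.1) inferInstance
        ≤ Prod.instMeasurableSpace := (hΦ.comp measurable_fst).comap_le
    have h1 : ∫ p : 𝒳 × 𝒴, ℓΦ0 (Φ p.1) ∂(μ₀ ⊗ₘ κ)
        = ∫ p : 𝒳 × 𝒴, ℓ (p.2, h (Φ p.1)) ∂(μ₀ ⊗ₘ κ) := by
      rw [integral_congr_ae hcond0, integral_condExp hm]
    have h2 : ∫ p : 𝒳 × 𝒴, ℓ (p.2, h (Φ p.1)) ∂(μ₀ ⊗ₘ κ)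
        = ∫ x, (∫ y, ℓ (y, h (Φ x)) ∂(κ x)) ∂μ₀ :=
      Measure.integral_compProd hint0
    have h3 : ∫ p : 𝒳 × 𝒴, ℓΦ0 (Φ p.1) ∂(μ₀ ⊗ₘ κ) = ∫ x, ℓΦ0 (Φ x) ∂μ₀ := by
      have hi : Integrable (fun p : 𝒳 × 𝒴 => ℓΦ0 (Φ p.1)) (μ₀ ⊗ₘ κ) :=
        (integrable_condExp).congr hcond0.symm
      rw [Measure.integral_compProd hi]
      simp
    rw [← h3, h1, h2]
  have hmap : ∫ φ, ℓΦw φ ∂(Measure.map Φ μ₀) = ∫ x, ℓΦw (Φ x) ∂μ₀ :=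
    integral_map hΦ.aemeasurable hℓΦw.aestronglyMeasurable
  have hsimp : ∫ x, ((ℓΦ0 (Φ x) - ∫ y, ℓ (y, h (Φ x)) ∂(κ x))
      - (ℓΦw (Φ x) - ∫ y, ℓ (y, h (Φ x)) ∂(κ x))) ∂μ₀
      = ∫ x, (ℓΦ0 (Φ x) - ℓΦw (Φ x)) ∂μ₀ := by
    congr 1; funext x; ring
  rw [hmap, hsimp, integral_sub hint3 hint4, key]; ring
end

section
/- Let (Ω, 𝓕, μ) be a probability space, 𝒳, ℛ, 𝒴 measurable spaces, X : Ω → 𝒳 and Y : Ω → 𝒴 measurable random variables, and Φ : 𝒳 → ℛ measurable. Suppose Y and X are conditionally independent given the σ-algebra σ(Φ ∘ X) generated by Φ ∘ X. Then for every measurable f : 𝒴 × ℛ → ℝ such that ω ↦ f(Y ω, Φ (X ω)) is integrable, the conditional expectation μ[f(Y, Φ(X)) | σ(X)] equals μ[f(Y, Φ(X)) | σ(Φ ∘ X)] μ-almost everywhere. -/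
open MeasureTheory ProbabilityTheory

/-! Wrapper lemmas stated in a context with a single measurable-space instance, to avoid
instance-resolution ambiguity when several σ-algebras are in scope. -/

section Wrappers

variable {Ω : Type*} [mΩ : MeasurableSpace Ω] {μ : Measure Ω}

lemma w_indicator_int {f : Ω → ℝ} {A : Set Ω} (h : Integrable f μ) (hA : MeasurableSet A) :
    Integrable (A.indicator f) μ := h.indicator hA

lemma w_integrable_one [IsFiniteMeasure μ] {A : Set Ω} (hA : MeasurableSet A) :
    Integrable (A.indicator (fun _ => (1:ℝ))) μ := (integrable_const 1).indicator hA

lemma w_integrableOn {f : Ω → ℝ} {s : Set Ω} (h : Integrable f μ) : IntegrableOn f s μ :=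
  h.integrableOn

lemma w_setIntegral_indicator {f : Ω → ℝ} {s t : Set Ω} (ht : MeasurableSet t) :
    ∫ x in s, t.indicator f x ∂μ = ∫ x in s ∩ t, f x ∂μ := setIntegral_indicator ht

lemma w_integral_indicator {f : Ω → ℝ} {A : Set Ω} (hA : MeasurableSet A) :
    ∫ x, A.indicator f x ∂μ = ∫ x in A, f x ∂μ := integral_indicator hA

lemma w_integral_add_compl {f : Ω → ℝ} {s : Set Ω} (hs : MeasurableSet s)
    (hf : Integrable f μ) : ∫ x in s, f x ∂μ + ∫ x in sᶜ, f x ∂μ = ∫ x, f x ∂μ :=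
  integral_add_compl hs hf

lemma w_integral_iUnion {f : Ω → ℝ} {s : ℕ → Set Ω} (hm : ∀ i, MeasurableSet (s i))
    (hd : Pairwise (Function.onFun Disjoint s)) (hfi : IntegrableOn f (⋃ i, s i) μ) :
    ∫ x in ⋃ n, s n, f x ∂μ = ∑' n, ∫ x in s n, f x ∂μ := integral_iUnion hm hd hfi

lemma w_bdd_mul {f g : Ω → ℝ} {c : ℝ} (hg : Integrable g μ) (hf : AEStronglyMeasurable f μ)
    (hb : ∀ᵐ x ∂μ, ‖f x‖ ≤ c) : Integrable (fun x => f x * g x) μ :=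
  Integrable.bdd_mul hg hf hb

lemma w_ae_restrict {f g : Ω → ℝ} {s : Set Ω} (h : f =ᵐ[μ] g) : f =ᵐ[μ.restrict s] g :=
  ae_restrict_of_ae h

end Wrappers

/-- Auxiliary lemma: if for every `mY`-measurable set `C` the conditional expectation of the
indicator of `C ∩ A` given `m'` factors as the product of the conditional expectations of the
indicators of `C` and `A`, then the conditional expectation of the indicator of `A` given
`mY ⊔ m'` coincides a.e. with that given `m'`. -/
lemma key_indicator_condexp {Ω : Type*} [mΩ : MeasurableSpace Ω] (μ : Measure Ω)
    [IsProbabilityMeasure μ]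
    (m' mY : MeasurableSpace Ω) (hm : m' ≤ mΩ) (hmY : mY ≤ mΩ)
    (A : Set Ω) (hA : MeasurableSet[mΩ] A)
    (hCI : ∀ C, MeasurableSet[mY] C →
      (μ[(C ∩ A).indicator (fun _ => (1:ℝ)) | m'])
        =ᵐ[μ] fun ω => (μ[C.indicator (fun _ => (1:ℝ)) | m']) ω *
          (μ[A.indicator (fun _ => (1:ℝ)) | m']) ω) :
    μ[A.indicator (fun _ => (1:ℝ)) | m'] =ᵐ[μ] μ[A.indicator (fun _ => (1:ℝ)) | mY ⊔ m'] := by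
  have hsup : mY ⊔ m' ≤ mΩ := sup_le hmY hm
  set i1 : Ω → ℝ := A.indicator (fun _ => (1:ℝ)) with hi1
  have h1A_int : Integrable i1 μ := w_integrable_one (mΩ := mΩ) hA
  set π : Set (Set Ω) :=
    {s : Set Ω | ∃ C D, MeasurableSet[mY] C ∧ MeasurableSet[m'] D ∧ s = C ∩ D} with hπ
  have hgen : (mY ⊔ m') = MeasurableSpace.generateFrom π := by
    refine le_antisymm (sup_le ?_ ?_) (MeasurableSpace.generateFrom_le ?_)
    · intro s hs
      exact MeasurableSpace.measurableSet_generateFrom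
        ⟨s, Set.univ, hs, MeasurableSet.univ, (Set.inter_univ s).symm⟩
    · intro s hs
      exact MeasurableSpace.measurableSet_generateFrom
        ⟨Set.univ, s, MeasurableSet.univ, hs, (Set.univ_inter s).symm⟩
    · rintro s ⟨C, D, hC, hD, rfl⟩
      exact ((le_sup_left : mY ≤ mY ⊔ m') _ hC).inter ((le_sup_right : m' ≤ mY ⊔ m') _ hD)
  have hpi : IsPiSystem π := by
    rintro s ⟨C1, D1, hC1, hD1, rfl⟩ t ⟨C2, D2, hC2, hD2, rfl⟩ -
    exact ⟨C1 ∩ C2, D1 ∩ D2, hC1.inter hC2, hD1.inter hD2, by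
      rw [Set.inter_inter_inter_comm]⟩
  have hmain : ∀ s : Set Ω, MeasurableSet[mY ⊔ m'] s →
      ∫ x in s, (μ[i1 | m']) x ∂μ = ∫ x in s, i1 x ∂μ := by
    have := MeasurableSpace.induction_on_inter (m := mY ⊔ m')
      (C := fun s _ => ∫ x in s, (μ[i1 | m']) x ∂μ = ∫ x in s, i1 x ∂μ)
      hgen hpi (by simp) ?_ ?_ ?_
    · exact fun s hs => this s hs
    · -- basic sets C ∩ D
      rintro t ⟨C, D, hC, hD, rfl⟩
      have hCΩ : MeasurableSet[mΩ] C := hmY _ hC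
      set oneC : Ω → ℝ := C.indicator (fun _ => (1:ℝ)) with honeC
      have honeC_int : Integrable oneC μ := w_integrable_one (mΩ := mΩ) hCΩ
      set g₀ : Ω → ℝ := μ[i1 | m'] with hg₀
      have heqf : C.indicator g₀ = fun ω => g₀ ω * oneC ω := by
        funext ω
        by_cases h : ω ∈ C <;> simp [honeC, h]
      have hint_g₀C : Integrable (fun ω => g₀ ω * oneC ω) μ := by
        rw [← heqf]; exact w_indicator_int (mΩ := mΩ) integrable_condExp hCΩ
      have pull1 : μ[(fun ω => g₀ ω * oneC ω) | m'] =ᵐ[μ]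
          fun ω => g₀ ω * (μ[oneC | m']) ω := by
        have := condExp_mul_of_stronglyMeasurable_left (m := m') (μ := μ)
          (f := g₀) (g := oneC) stronglyMeasurable_condExp hint_g₀C honeC_int
        filter_upwards [this] with ω hω
        exact hω
      have lhs_eq : ∫ x in C ∩ D, g₀ x ∂μ = ∫ x in D, (fun ω => g₀ ω * (μ[oneC | m']) ω) x ∂μ := by
        rw [Set.inter_comm, ← w_setIntegral_indicator (mΩ := mΩ) hCΩ, heqf,
          ← setIntegral_condExp hm hint_g₀C hD]
        exact integral_congr_ae (w_ae_restrict (mΩ := mΩ) pull1)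
      have hCA_int : Integrable ((C ∩ A).indicator (fun _ => (1:ℝ))) μ :=
        w_integrable_one (mΩ := mΩ) (hCΩ.inter hA)
      have rhs_eq : ∫ x in C ∩ D, i1 x ∂μ = ∫ x in D, (fun ω => g₀ ω * (μ[oneC | m']) ω) x ∂μ := by
        rw [Set.inter_comm, ← w_setIntegral_indicator (mΩ := mΩ) hCΩ, hi1, Set.indicator_indicator,
          ← setIntegral_condExp hm hCA_int hD]
        refine integral_congr_ae (w_ae_restrict (mΩ := mΩ) ?_)
        filter_upwards [hCI C hC] with ω hω
        rw [hω, mul_comm]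
      rw [lhs_eq, rhs_eq]
    · -- complements
      intro t ht hPt
      have htΩ : MeasurableSet[mΩ] t := hsup _ ht
      have e1 := w_integral_add_compl (mΩ := mΩ) htΩ (integrable_condExp (f := i1) (m := m') (μ := μ))
      have e2 := w_integral_add_compl (mΩ := mΩ) htΩ h1A_int
      have e3 : ∫ x, (μ[i1 | m']) x ∂μ = ∫ x, i1 x ∂μ := integral_condExp hm (f := i1)
      linarith
    · -- disjoint unions
      intro g hdisj hmeas hP
      have hgΩ : ∀ i, MeasurableSet[mΩ] (g i) := fun i => hsup _ (hmeas i)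
      rw [w_integral_iUnion (mΩ := mΩ) hgΩ hdisj (w_integrableOn (mΩ := mΩ) integrable_condExp),
        w_integral_iUnion (mΩ := mΩ) hgΩ hdisj (w_integrableOn (mΩ := mΩ) h1A_int)]
      exact tsum_congr hP
  exact (ae_eq_condExp_of_forall_setIntegral_eq hsup h1A_int
    (fun s _ _ => w_integrableOn (mΩ := mΩ) integrable_condExp)
    (fun s hs _ => hmain s hs)
    ((stronglyMeasurable_condExp.mono le_sup_right).aestronglyMeasurable)).symm.symm

/-- if `Y` and `X` are conditionally independent given the σ-algebra generated
by `Φ ∘ X` (the sufficiency condition `Y ⫫ X | Φ(X)`), then for any integrable loss of the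
form `f(Y, Φ(X))`, the conditional expectation given `σ(X)` coincides a.e. with the
conditional expectation given `σ(Φ ∘ X)`. -/
theorem condexp_given_covariates_eq_given_representation
    {Ω 𝒳 ℛ 𝒴 : Type*} [mΩ : MeasurableSpace Ω] [StandardBorelSpace Ω]
    [MeasurableSpace 𝒳] [MeasurableSpace ℛ] [MeasurableSpace 𝒴]
    (μ : Measure Ω) [IsProbabilityMeasure μ]
    (X : Ω → 𝒳) (hX : Measurable X)
    (Y : Ω → 𝒴) (hY : Measurable Y)
    (Φ : 𝒳 → ℛ) (hΦ : Measurable Φ)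
    (hm : MeasurableSpace.comap (fun ω => Φ (X ω)) inferInstance ≤ mΩ)
    (hCI : CondIndepFun (MeasurableSpace.comap (fun ω => Φ (X ω)) inferInstance) hm Y X μ)
    (f : 𝒴 × ℛ → ℝ) (hf : Measurable f)
    (hint : Integrable (fun ω => f (Y ω, Φ (X ω))) μ) :
    μ[(fun ω => f (Y ω, Φ (X ω))) | MeasurableSpace.comap X inferInstance]
      =ᵐ[μ]
    μ[(fun ω => f (Y ω, Φ (X ω))) |
        MeasurableSpace.comap (fun ω => Φ (X ω)) inferInstance] := by
  set m' : MeasurableSpace Ω := MeasurableSpace.comap (fun ω => Φ (X ω)) inferInstance with hm'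
  set mY : MeasurableSpace Ω := MeasurableSpace.comap Y inferInstance with hmY'
  set mX : MeasurableSpace Ω := MeasurableSpace.comap X inferInstance with hmX'
  have hmY : mY ≤ mΩ := hY.comap_le
  have hmX : mX ≤ mΩ := hX.comap_le
  have hm'X : m' ≤ mX := by
    rintro s ⟨t, ht, rfl⟩
    exact ⟨Φ ⁻¹' t, hΦ ht, rfl⟩
  set Z : Ω → ℝ := fun ω => f (Y ω, Φ (X ω)) with hZ
  set mYG : MeasurableSpace Ω := mY ⊔ m' with hmYG'
  have hsup : mYG ≤ mΩ := sup_le hmY hm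
  -- Z is strongly measurable w.r.t. mY ⊔ m'
  have hYm : Measurable[mYG] Y := by
    rw [measurable_iff_comap_le]; exact le_sup_left
  have hΦXm : Measurable[mYG] (fun ω => Φ (X ω)) := by
    rw [measurable_iff_comap_le]; exact le_sup_right
  have hZsm : StronglyMeasurable[mYG] Z :=
    (hf.comp (Measurable.prodMk hYm hΦXm)).stronglyMeasurable
  -- the conditional independence in elementary form
  have hCI' := (condIndepFun_iff_condExp_inter_preimage_eq_mul (m' := m') (hm' := hm)
    hY hX).mp hCI
  refine (ae_eq_condExp_of_forall_setIntegral_eq hmX hint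
    (fun s _ _ => w_integrableOn (mΩ := mΩ) integrable_condExp) ?_
    ((stronglyMeasurable_condExp.mono hm'X).aestronglyMeasurable)).symm
  rintro s ⟨B, hB, rfl⟩ -
  set A : Set Ω := X ⁻¹' B with hA'
  have hAΩ : MeasurableSet[mΩ] A := hX hB
  set oneA : Ω → ℝ := A.indicator (fun _ => (1:ℝ)) with honeA
  have honeA_int : Integrable oneA μ := w_integrable_one (mΩ := mΩ) hAΩ
  -- key: conditional expectation of the indicator of A given mYG equals that given m'
  have key : μ[oneA | m'] =ᵐ[μ] μ[oneA | mYG] := by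
    refine key_indicator_condexp (mΩ := mΩ) μ m' mY hm hmY A hAΩ ?_
    rintro C ⟨t, ht, rfl⟩
    exact hCI' t B ht hB
  set h₀ : Ω → ℝ := μ[oneA | m'] with hh₀
  set g' : Ω → ℝ := μ[Z | m'] with hg'
  -- h₀ is bounded by 1 in norm a.e.
  have h₀nonneg : 0 ≤ᵐ[μ] h₀ :=
    condExp_nonneg (ae_of_all _ fun ω => Set.indicator_nonneg (fun _ _ => zero_le_one) ω)
  have h₀le1 : h₀ ≤ᵐ[μ] fun _ => (1:ℝ) := by
    have h1 : μ[(fun _ => (1:ℝ)) | m'] = fun _ => (1:ℝ) := condExp_const hm (1:ℝ)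
    have h2 := condExp_mono (m := m') honeA_int (integrable_const (1:ℝ) (μ := μ))
      (ae_of_all _ fun ω => Set.indicator_le_self' (fun _ _ => zero_le_one) ω)
    rwa [h1] at h2
  have h₀bdd : ∀ᵐ ω ∂μ, ‖h₀ ω‖ ≤ 1 := by
    filter_upwards [h₀nonneg, h₀le1] with ω h1 h2
    rw [Real.norm_eq_abs, abs_le]
    have h1' : (0:ℝ) ≤ h₀ ω := h1
    have h2' : h₀ ω ≤ (1:ℝ) := h2
    exact ⟨by linarith, h2'⟩
  have h₀meas : AEStronglyMeasurable[mΩ] h₀ μ :=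
    (stronglyMeasurable_condExp.mono hm).aestronglyMeasurable
  -- integrability facts
  have hZA_int : Integrable (fun ω => Z ω * oneA ω) μ := by
    have h : (fun ω => Z ω * oneA ω) = A.indicator Z := by
      funext ω; by_cases h : ω ∈ A <;> simp [honeA, h]
    rw [h]; exact w_indicator_int (mΩ := mΩ) hint hAΩ
  have hh₀Z_int : Integrable (fun ω => h₀ ω * Z ω) μ :=
    w_bdd_mul (mΩ := mΩ) hint h₀meas h₀bdd
  have hg'A_int : Integrable (fun ω => g' ω * oneA ω) μ := by
    have h : (fun ω => g' ω * oneA ω) = A.indicator g' := by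
      funext ω; by_cases h : ω ∈ A <;> simp [honeA, h]
    rw [h]; exact w_indicator_int (mΩ := mΩ) integrable_condExp hAΩ
  -- pull-out identities
  have pull1 : μ[(fun ω => Z ω * oneA ω) | mYG] =ᵐ[μ] fun ω => Z ω * (μ[oneA | mYG]) ω := by
    have := condExp_mul_of_stronglyMeasurable_left (m := mYG) (μ := μ)
      (f := Z) (g := oneA) hZsm hZA_int honeA_int
    filter_upwards [this] with ω hω
    exact hω
  have pull2 : μ[(fun ω => h₀ ω * Z ω) | m'] =ᵐ[μ] fun ω => h₀ ω * g' ω := by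
    have := condExp_mul_of_stronglyMeasurable_left (m := m') (μ := μ)
      (f := h₀) (g := Z) stronglyMeasurable_condExp hh₀Z_int hint
    filter_upwards [this] with ω hω
    exact hω
  have pull3 : μ[(fun ω => g' ω * oneA ω) | m'] =ᵐ[μ] fun ω => g' ω * h₀ ω := by
    have := condExp_mul_of_stronglyMeasurable_left (m := m') (μ := μ)
      (f := g') (g := oneA) stronglyMeasurable_condExp hg'A_int honeA_int
    filter_upwards [this] with ω hω
    exact hω
  calc
    ∫ x in A, g' x ∂μ = ∫ x, (fun ω => g' ω * oneA ω) x ∂μ := by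
      rw [← w_integral_indicator (mΩ := mΩ) hAΩ]
      congr 1
      funext ω; by_cases h : ω ∈ A <;> simp [honeA, h]
    _ = ∫ x, (fun ω => g' ω * h₀ ω) x ∂μ := by
      rw [← integral_condExp hm (f := fun ω => g' ω * oneA ω)]
      exact integral_congr_ae pull3
    _ = ∫ x, (fun ω => h₀ ω * Z ω) x ∂μ := by
      rw [← integral_condExp hm (f := fun ω => h₀ ω * Z ω)]
      refine Eq.trans ?_ (integral_congr_ae pull2).symm
      exact integral_congr_ae (ae_of_all _ fun ω => mul_comm _ _)
    _ = ∫ x, (fun ω => Z ω * (μ[oneA | mYG]) ω) x ∂μ := by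
      refine integral_congr_ae ?_
      filter_upwards [key] with ω hω
      rw [mul_comm, hω]
    _ = ∫ x, (fun ω => Z ω * oneA ω) x ∂μ := by
      rw [← integral_condExp hsup (f := fun ω => Z ω * oneA ω)]
      exact (integral_congr_ae pull1).symm
    _ = ∫ x in A, Z x ∂μ := by
      rw [← w_integral_indicator (mΩ := mΩ) hAΩ]
      congr 1
      funext ω; by_cases h : ω ∈ A <;> simp [honeA, h]
end

section
/- Let (Ω, 𝓕, μ) be a probability space. Let 𝒳 be a countable type, X : Ω → 𝒳, A : Ω → {0, 1}, C : Ω → ℕ, and for a fixed treatment value a ∈ {0,1} let T_a : Ω → ℕ be the potential event time, all measurable. Let T : Ω → ℕ be the observed event time and assume consistency: T(ω) = T_a(ω) for all ω with A(ω) = a. Fix τ ∈ ℕ and x ∈ 𝒳, and assume the positivity condition μ(T_a ≥ τ ∧ C ≥ τ ∧ A = a ∧ X = x) > 0 and μ(T_a ≥ τ ∧ X = x) > 0. Assume unconfoundedness in the form: for every s ∈ ℕ, μ(T_a = s | X = x) = μ(T_a = s | A = a ∧ X = x); and censoring at random in the form: for every s ∈ ℕ, μ(T_a = s | A = a ∧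 X = x) = μ(T_a = s | C ≥ τ ∧ A = a ∧ X = x). Then the causal hazard equals the observational hazard: μ(T_a = τ | T_a ≥ τ ∧ X = x) = μ(T = τ ∧ C ≥ τ | T ≥ τ ∧ C ≥ τ ∧ A = a ∧ X = x). -/
open MeasureTheory ProbabilityTheory

/-- Auxiliary cancellation lemma in `ℝ≥0∞`: from `b*e = a*f` and `b*c = a*d` with
`a, b` nonzero and finite, deduce `d*e = c*f`. -/
lemma ennreal_cross_cancel {a b c d e f : ENNReal}
    (ha0 : a ≠ 0) (ha : a ≠ ⊤)
    (h1 : b * e = a * f) (h2 : b * c = a * d) :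
    d * e = c * f := by
  have key : a * (d * e) = a * (c * f) := by
    calc a * (d * e) = (a * d) * e := by ring
    _ = (b * c) * e := by rw [h2]
    _ = c * (b * e) := by ring
    _ = c * (a * f) := by rw [h1]
    _ = a * (c * f) := by ring
  have := congrArg (fun z => a⁻¹ * z) key
  simpa [← mul_assoc, ENNReal.inv_mul_cancel ha0 ha] using this

/-- identification of the treatment-specific hazard.  Under consistency
(`T = T_a` whenever `A = a`), unconfoundedness (the conditional law of `T_a` given `X = x`
does not change upon further conditioning on `A = a`), censoring at random (it does not
change upon further conditioning on `C ≥ τ`), and positivity, the causal hazard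
`μ(T_a = τ | T_a ≥ τ, X = x)` equals the observational hazard
`μ(T = τ, C ≥ τ | T ≥ τ, C ≥ τ, A = a, X = x)`. -/
theorem treatment_specific_hazard_identification
    {Ω 𝒳 : Type*} [MeasurableSpace Ω] [MeasurableSpace 𝒳]
    [Countable 𝒳] [MeasurableSingletonClass 𝒳]
    (μ : Measure Ω) [IsProbabilityMeasure μ]
    (X : Ω → 𝒳) (A : Ω → Bool) (C : Ω → ℕ) (Ta T : Ω → ℕ)
    (hX : Measurable X) (hA : Measurable A) (hC : Measurable C)
    (hTa : Measurable Ta) (hT : Measurable T)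
    (a : Bool)
    (hcons : ∀ ω, A ω = a → T ω = Ta ω)
    (τ : ℕ) (x : 𝒳)
    (hpos1 : 0 < μ {ω | τ ≤ Ta ω ∧ τ ≤ C ω ∧ A ω = a ∧ X ω = x})
    (hpos2 : 0 < μ {ω | τ ≤ Ta ω ∧ X ω = x})
    (hunconf : ∀ s : ℕ, μ[|{ω | X ω = x}] {ω | Ta ω = s}
        = μ[|{ω | A ω = a ∧ X ω = x}] {ω | Ta ω = s})
    (hcar : ∀ s : ℕ, μ[|{ω | A ω = a ∧ X ω = x}] {ω | Ta ω = s}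
        = μ[|{ω | τ ≤ C ω ∧ A ω = a ∧ X ω = x}] {ω | Ta ω = s}) :
    μ[|{ω | τ ≤ Ta ω ∧ X ω = x}] {ω | Ta ω = τ}
      = μ[|{ω | τ ≤ T ω ∧ τ ≤ C ω ∧ A ω = a ∧ X ω = x}] {ω | T ω = τ ∧ τ ≤ C ω} := by
  classical
  set B : Set Ω := {ω | X ω = x} with hBdef
  set B2 : Set Ω := {ω | τ ≤ C ω ∧ A ω = a ∧ X ω = x} with hB2def
  set G : Set Ω := {ω | τ ≤ Ta ω} with hGdef
  set E : Set Ω := {ω | Ta ω = τ} with hEdef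
  -- measurability of the basic sets
  have hmB : MeasurableSet B := hX (measurableSet_singleton x)
  have hmEs : ∀ s : ℕ, MeasurableSet {ω | Ta ω = s} :=
    fun s => hTa (measurableSet_singleton s)
  have hmE : MeasurableSet E := hmEs τ
  have hmG : MeasurableSet G := hTa measurableSet_Ici
  have hmCa : MeasurableSet {ω : Ω | τ ≤ C ω} := hC measurableSet_Ici
  have hmAa : MeasurableSet {ω : Ω | A ω = a} := hA (measurableSet_singleton a)
  have hmB2 : MeasurableSet B2 := by
    have : B2 = {ω : Ω | τ ≤ C ω} ∩ ({ω : Ω | A ω = a} ∩ B) := by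
      ext ω; simp [hB2def, hBdef, and_assoc]
    rw [this]; exact hmCa.inter (hmAa.inter hmB)
  have hmAX : MeasurableSet {ω : Ω | A ω = a ∧ X ω = x} := by
    have : {ω : Ω | A ω = a ∧ X ω = x} = {ω : Ω | A ω = a} ∩ B := by
      ext ω; simp [hBdef]
    rw [this]; exact hmAa.inter hmB
  -- identify the conditioning sets
  have hS1 : {ω | τ ≤ Ta ω ∧ X ω = x} = G ∩ B := by
    ext ω; simp [hGdef, hBdef, Set.mem_inter_iff]
  have hS2 : {ω | τ ≤ T ω ∧ τ ≤ C ω ∧ A ω = a ∧ X ω = x} = G ∩ B2 := by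
    ext ω
    simp only [Set.mem_setOf_eq, hGdef, hB2def, Set.mem_inter_iff]
    constructor
    · rintro ⟨h1, h2, h3, h4⟩; exact ⟨by rw [← hcons ω h3]; exact h1, h2, h3, h4⟩
    · rintro ⟨h1, h2, h3, h4⟩; exact ⟨by rw [hcons ω h3]; exact h1, h2, h3, h4⟩
  have hmS2 : MeasurableSet (G ∩ B2) := hmG.inter hmB2
  -- intersections with the events
  have hI1 : G ∩ B ∩ E = B ∩ E := by
    ext ω
    simp only [Set.mem_inter_iff, hGdef, hEdef, Set.mem_setOf_eq]
    constructor
    · rintro ⟨⟨_, h2⟩, h3⟩; exact ⟨h2, h3⟩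
    · rintro ⟨h2, h3⟩; exact ⟨⟨le_of_eq h3.symm, h2⟩, h3⟩
  have hI2 : G ∩ B2 ∩ {ω | T ω = τ ∧ τ ≤ C ω} = B2 ∩ E := by
    ext ω
    simp only [Set.mem_inter_iff, hGdef, hEdef, hB2def, Set.mem_setOf_eq]
    constructor
    · rintro ⟨⟨h1, h2, h3, h4⟩, h5, h6⟩
      exact ⟨⟨h2, h3, h4⟩, by rw [← hcons ω h3]; exact h5⟩
    · rintro ⟨⟨h2, h3, h4⟩, h5⟩
      have hT5 : T ω = τ := by rw [hcons ω h3]; exact h5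
      exact ⟨⟨h5 ▸ le_refl τ, h2, h3, h4⟩, hT5, h2⟩
  -- write both sides explicitly
  rw [hS1, hS2, cond_apply (hmG.inter hmB), cond_apply hmS2, hI1, hI2]
  -- set up the scalars
  have hpos2' : 0 < μ (G ∩ B) := by
    rwa [hS1] at hpos2
  have hpos1' : 0 < μ (G ∩ B2) := by
    have : {ω | τ ≤ Ta ω ∧ τ ≤ C ω ∧ A ω = a ∧ X ω = x} = G ∩ B2 := by
      ext ω; simp [hGdef, hB2def, Set.mem_inter_iff]
    rwa [this] at hpos1
  have hfin : ∀ s : Set Ω, μ s ≠ ⊤ := fun s => (measure_lt_top μ s).ne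
  have hBpos : 0 < μ B := lt_of_lt_of_le hpos2' (measure_mono Set.inter_subset_right)
  have hB2pos : 0 < μ B2 := lt_of_lt_of_le hpos1' (measure_mono Set.inter_subset_right)
  -- the key termwise identity
  have key : ∀ s : ℕ, (μ B)⁻¹ * μ (B ∩ {ω | Ta ω = s})
      = (μ B2)⁻¹ * μ (B2 ∩ {ω | Ta ω = s}) := by
    intro s
    have h := (hunconf s).trans (hcar s)
    rwa [cond_apply hmB, cond_apply hmB2] at h
  -- key identity for the survival event G
  have hGdecomp : ∀ S : Set Ω, S ∩ G = ⋃ n : ℕ, S ∩ {ω | Ta ω = τ + n} := by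
    intro S
    ext ω
    simp only [Set.mem_inter_iff, Set.mem_iUnion, hGdef, Set.mem_setOf_eq]
    constructor
    · rintro ⟨h1, h2⟩
      obtain ⟨n, hn⟩ := le_iff_exists_add.mp h2
      exact ⟨n, h1, hn⟩
    · rintro ⟨n, h1, h2⟩
      exact ⟨h1, by rw [h2]; exact Nat.le_add_right τ n⟩
  have hdisj : ∀ S : Set Ω, Pairwise (Function.onFun Disjoint
      (fun n : ℕ => S ∩ {ω | Ta ω = τ + n})) := by
    intro S m n hmn
    refine Set.disjoint_left.mpr ?_
    rintro ω ⟨_, h1⟩ ⟨_, h2⟩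
    exact hmn (Nat.add_left_cancel ((h1 : Ta ω = τ + m).symm.trans h2))
  have hsum : ∀ (S : Set Ω), MeasurableSet S →
      μ (S ∩ G) = ∑' n : ℕ, μ (S ∩ {ω | Ta ω = τ + n}) := by
    intro S hS
    rw [hGdecomp S]
    exact measure_iUnion (hdisj S) (fun n => hS.inter (hmEs (τ + n)))
  have keyG : (μ B)⁻¹ * μ (B ∩ G) = (μ B2)⁻¹ * μ (B2 ∩ G) := by
    rw [hsum B hmB, hsum B2 hmB2, ENNReal.tsum_mul_left.symm, ENNReal.tsum_mul_left.symm]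
    exact tsum_congr fun n => key (τ + n)
  -- final arithmetic
  rw [Set.inter_comm G B, Set.inter_comm G B2]
  have hc0 : μ (B ∩ G) ≠ 0 := by rw [Set.inter_comm]; exact hpos2'.ne'
  have hd0 : μ (B2 ∩ G) ≠ 0 := by rw [Set.inter_comm]; exact hpos1'.ne'
  rw [← ENNReal.div_eq_inv_mul, ← ENNReal.div_eq_inv_mul,
    ENNReal.div_eq_div_iff hd0 (hfin _) hc0 (hfin _)]
  -- goal : μ (B2 ∩ G) * μ (B ∩ E) = μ (B ∩ G) * μ (B2 ∩ E)
  have hkeyE := key τ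
  rw [← hEdef] at hkeyE
  have h1 : μ B2 * (μ B)⁻¹ * μ (B ∩ E) = μ B2 * ((μ B2)⁻¹ * μ (B2 ∩ E)) := by
    rw [mul_assoc, hkeyE]
  have h2 : μ B2 * (μ B)⁻¹ * μ (B ∩ G) = μ B2 * ((μ B2)⁻¹ * μ (B2 ∩ G)) := by
    rw [mul_assoc, keyG]
  have hB2fin := hfin B2
  have h1' : μ B2 * (μ B)⁻¹ * μ (B ∩ E) = μ (B2 ∩ E) := by
    rw [h1, ← mul_assoc, ENNReal.mul_inv_cancel hB2pos.ne' hB2fin, one_mul]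
  have h2' : μ B2 * (μ B)⁻¹ * μ (B ∩ G) = μ (B2 ∩ G) := by
    rw [h2, ← mul_assoc, ENNReal.mul_inv_cancel hB2pos.ne' hB2fin, one_mul]
  calc μ (B2 ∩ G) * μ (B ∩ E)
      = μ B2 * (μ B)⁻¹ * μ (B ∩ G) * μ (B ∩ E) := by rw [h2']
    _ = (μ B2 * (μ B)⁻¹ * μ (B ∩ E)) * μ (B ∩ G) := by ring
    _ = μ (B2 ∩ E) * μ (B ∩ G) := by rw [h1']
    _ = μ (B ∩ G) * μ (B2 ∩ E) := mul_comm _ _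
end
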